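/- Let n ≥ 1 and let F := {1^i 0^{n−i} : 0 ≤ i ≤ n} ⊆ {0,1}^n be the set of bit strings consisting of a prefix of i ones followed by n−i zeros. Let x be a random bit string in {0,1}^n with P(x ∈ F) ≤ r for some r ∈ [0,1], and let y be obtained from x by standard bit mutation with rate 1/n, i.e., conditionally on x, each bit of x is flipped independently with probability 1/n. Then P(y ∈ F) ≤ r·(1/e + 3/n) + 3/n. -/

import Mathlib

/-- `onesZeros n i` is the bit string `1^i 0^(n-i)`. -/
def onesZeros (n i : ℕ) : Fin n → Bool := fun k => decide ((k : ℕ) < i)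

/-- The Pareto set of LOTZ: all bit strings `1^i 0^(n-i)` for `0 ≤ i ≤ n`. -/
def paretoSet (n : ℕ) : Finset (Fin n → Bool) := (Finset.range (n + 1)).image (onesZeros n)

/-- Standard bit mutation with rate `1/n`: each bit of `x` is flipped independently with
probability `1/n`; `mutProb n x z` is the probability that the result equals `z`. -/
noncomputable def mutProb (n : ℕ) (x z : Fin n → Bool) : ℝ :=
  ∏ i : Fin n, if z i = x i then 1 - 1 / (n : ℝ) else 1 / (n : ℝ)

lemma mutProb_nonneg (n : ℕ) (hn : 1 ≤ n) (x z : Fin n → Bool) : 0 ≤ mutProb n x z := by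
  apply Finset.prod_nonneg
  intro i _
  have h1 : (1:ℝ) ≤ (n:ℝ) := by exact_mod_cast hn
  have h2 : (0:ℝ) < (n:ℝ) := by positivity
  split
  · have : 1/(n:ℝ) ≤ 1 := by rw [div_le_one h2]; exact h1
    linarith
  · positivity

lemma sum_piFinset_mutProb (n : ℕ) (x : Fin n → Bool) (S : Fin n → Finset Bool) :
    ∑ z ∈ Fintype.piFinset S, mutProb n x z
      = ∏ i, ∑ b ∈ S i, (if b = x i then (1:ℝ) - 1/n else 1/n) := by
  unfold mutProb
  rw [Finset.prod_univ_sum]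

lemma sum_univ_mutProb (n : ℕ) (x : Fin n → Bool) :
    ∑ z : Fin n → Bool, mutProb n x z = 1 := by
  have := sum_piFinset_mutProb n x (fun _ => Finset.univ)
  rw [Fintype.piFinset_univ] at this
  rw [this]
  rw [Finset.prod_eq_one]
  intro i _
  cases hx : x i <;> simp [Finset.sum_ite_eq, hx]
open Finset
lemma exists_descent (n : ℕ) (x : Fin n → Bool) (hx : x ∉ paretoSet n) :
    ∃ k : ℕ, ∃ h : k + 1 < n, x ⟨k, by omega⟩ = false ∧ x ⟨k+1, h⟩ = true := by
  by_contra hc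
  push_neg at hc
  have prop : ∀ d a : ℕ, ∀ h : a + d < n, x ⟨a, by omega⟩ = false → x ⟨a + d, h⟩ = false := by
    intro d
    induction d with
    | zero => intro a h hf; simpa using hf
    | succ d ih =>
      intro a h hf
      have h' : a + d < n := by omega
      have hd := ih a h' hf
      have h2 : (a + d) + 1 < n := by omega
      have hne := hc (a + d) h2 hd
      cases hv : x ⟨a + d + 1, h2⟩
      · rfl
      · exact absurd hv hne
  apply hx
  classical
  set P : ℕ → Prop := fun m => m = n ∨ ∃ h : m < n, x ⟨m, h⟩ = false with hP
  have hex : ∃ m, P m := ⟨n, Or.inl rfl⟩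
  have hPi : P (Nat.find hex) := Nat.find_spec hex
  set i := Nat.find hex with hi
  have hile : i ≤ n := by rcases hPi with h | ⟨h, _⟩ <;> omega
  have hlt : ∀ m < i, ¬ P m := fun m hm => Nat.find_min hex hm
  have hxeq : x = onesZeros n i := by
    funext k
    unfold onesZeros
    by_cases hk : (k : ℕ) < i
    · have hnp : ¬ ((k:ℕ) = n ∨ ∃ h : (k:ℕ) < n, x ⟨(k:ℕ), h⟩ = false) := hlt k hk
      push_neg at hnp
      have hnf : x ⟨(k:ℕ), k.isLt⟩ ≠ false := hnp.2 k.isLt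
      rw [Fin.eta] at hnf
      simp [hk]
      simpa using hnf
    · have hin : i < n := by omega
      have hxi : x ⟨i, hin⟩ = false := by
        rcases hPi with h | ⟨h, hf⟩
        · omega
        · exact hf
      have hk' : i + ((k:ℕ) - i) < n := by omega
      have hpp := prop ((k:ℕ) - i) i hk' hxi
      have hkk : (⟨i + ((k:ℕ) - i), hk'⟩ : Fin n) = k :=
        Fin.ext (show i + ((k:ℕ) - i) = (k:ℕ) by omega)
      rw [hkk] at hpp
      simp [hk]
      exact hpp
  rw [hxeq]
  unfold paretoSet
  exact Finset.mem_image.mpr ⟨i, Finset.mem_range.mpr (by omega), rfl⟩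


lemma sum_pareto_not_mem (n : ℕ) (hn : 1 ≤ n) (x : Fin n → Bool) (hx : x ∉ paretoSet n) :
    ∑ z ∈ paretoSet n, mutProb n x z ≤ 2 / n := by
  classical
  obtain ⟨k, h, hk0, hk1⟩ := exists_descent n x hx
  set k0 : Fin n := ⟨k, by omega⟩ with hk0d
  set k1 : Fin n := ⟨k+1, h⟩ with hk1d
  have hne : k0 ≠ k1 := by
    intro hh
    have := congrArg Fin.val hh
    simp [hk0d, hk1d] at this
  set S : Fin n → Finset Bool :=
    fun a => if a = k0 then {false} else if a = k1 then {true} else Finset.univ with hS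
  set B : Finset (Fin n → Bool) := Fintype.piFinset S with hB
  have hmemB : ∀ z : Fin n → Bool, z ∈ B ↔ z k0 = false ∧ z k1 = true := by
    intro z
    rw [hB, Fintype.mem_piFinset]
    constructor
    · intro hz
      have h1 := hz k0
      have h2 := hz k1
      rw [hS] at h1 h2
      simp [hne, hne.symm] at h1 h2
      exact ⟨h1, h2⟩
    · rintro ⟨h1, h2⟩ a
      rw [hS]
      by_cases ha0 : a = k0
      · simp [ha0, h1]
      · by_cases ha1 : a = k1
        · simp [ha0, ha1, h2, hne.symm]
        · simp [ha0, ha1]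
  have hsubset : paretoSet n ⊆ Finset.univ \ B := by
    intro z hz
    rw [Finset.mem_sdiff]
    refine ⟨Finset.mem_univ _, ?_⟩
    rw [hmemB]
    rintro ⟨h1, h2⟩
    obtain ⟨j, hj, rfl⟩ := Finset.mem_image.mp hz
    unfold onesZeros at h1 h2
    simp [hk0d, hk1d] at h1 h2
    omega
  have hsumB : ∑ z ∈ B, mutProb n x z = (1 - 1/(n:ℝ)) * (1 - 1/(n:ℝ)) := by
    rw [hB, sum_piFinset_mutProb]
    have heach : ∀ i : Fin n, (∑ b ∈ S i, (if b = x i then (1:ℝ) - 1/n else 1/n))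
        = if i = k0 then (1 - 1/(n:ℝ)) else if i = k1 then (1 - 1/(n:ℝ)) else 1 := by
      intro i
      rw [hS]
      by_cases h0 : i = k0
      · simp [h0, hk0]
      · by_cases h1 : i = k1
        · simp [h0, h1, hk1, hne.symm]
        · simp [h0, h1]
          cases hxi : x i <;> simp [hxi]
    rw [Finset.prod_congr rfl (fun i _ => heach i)]
    rw [← Finset.prod_subset (Finset.subset_univ {k0, k1})
      (by intro i _ hi; simp at hi; push_neg at hi; simp [hi.1, hi.2])]
    rw [Finset.prod_pair hne]
    simp [hne, hne.symm]
  have hnn : (0:ℝ) < (n:ℝ) := by exact_mod_cast hn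
  calc ∑ z ∈ paretoSet n, mutProb n x z
      ≤ ∑ z ∈ Finset.univ \ B, mutProb n x z :=
        Finset.sum_le_sum_of_subset_of_nonneg hsubset
          (fun z _ _ => mutProb_nonneg n hn x z)
    _ = (∑ z : Fin n → Bool, mutProb n x z) - ∑ z ∈ B, mutProb n x z :=
        Finset.sum_sdiff_eq_sub (Finset.subset_univ B)
    _ = 1 - (1 - 1/(n:ℝ)) * (1 - 1/(n:ℝ)) := by rw [sum_univ_mutProb, hsumB]
    _ ≤ 2 / n := by
        have : (0:ℝ) ≤ (1/(n:ℝ))^2 := by positivity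
        have h2 : 2/(n:ℝ) = 2 * (1/n) := by ring
        nlinarith [sq_nonneg (1/(n:ℝ))]


lemma onesZeros_injOn (n : ℕ) : Set.InjOn (onesZeros n) (Finset.range (n+1)) := by
  intro a ha b hb hab
  simp [Finset.coe_range, Set.mem_Iio] at ha hb
  by_contra hne
  rcases Nat.lt_or_ge a b with hlt | hge
  · have han : a < n := by omega
    have := congrFun hab ⟨a, han⟩
    simp [onesZeros] at this
    omega
  · have hblt : b < a := by omega
    have hbn : b < n := by omega
    have := congrFun hab ⟨b, hbn⟩
    simp [onesZeros] at this
    omega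

lemma mutProb_onesZeros (n i j : ℕ) (hij : i ≤ j) (hj : j ≤ n) :
    mutProb n (onesZeros n i) (onesZeros n j)
      = (1/(n:ℝ))^(j-i) * (1 - 1/(n:ℝ))^(n-(j-i)) := by
  unfold mutProb onesZeros
  rw [Fin.prod_univ_eq_prod_range
    (fun k => if (decide (k < j) = decide (k < i)) then (1:ℝ) - 1/n else 1/n) n]
  rw [Finset.range_eq_Ico]
  rw [← Finset.prod_Ico_consecutive _ (Nat.zero_le j) hj]
  rw [← Finset.prod_Ico_consecutive _ (Nat.zero_le i) hij]
  have e1 : ∀ k ∈ Finset.Ico 0 i,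
      (if (decide (k < j) = decide (k < i)) then (1:ℝ) - 1/n else 1/n) = 1 - 1/n := by
    intro k hk
    simp at hk
    have : k < j := by omega
    simp [this, hk]
  have e2 : ∀ k ∈ Finset.Ico i j,
      (if (decide (k < j) = decide (k < i)) then (1:ℝ) - 1/n else 1/n) = 1/n := by
    intro k hk
    simp at hk
    simp [hk.2, Nat.not_lt.mpr hk.1]
  have e3 : ∀ k ∈ Finset.Ico j n,
      (if (decide (k < j) = decide (k < i)) then (1:ℝ) - 1/n else 1/n) = 1 - 1/n := by
    intro k hk
    simp at hk
    have h1 : ¬ (k < j) := Nat.not_lt.mpr hk.1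
    have h2 : ¬ (k < i) := by omega
    simp [h1, h2]
  rw [Finset.prod_congr rfl e1, Finset.prod_congr rfl e2, Finset.prod_congr rfl e3,
    Finset.prod_const, Finset.prod_const, Finset.prod_const]
  simp [Nat.card_Ico]
  rw [show n - (j - i) = i + (n - j) by omega, pow_add]
  ring


lemma mutProb_comm (n : ℕ) (x z : Fin n → Bool) : mutProb n x z = mutProb n z x := by
  unfold mutProb
  apply Finset.prod_congr rfl
  intro i _
  cases x i <;> cases z i <;> simp

lemma geom_tail (p : ℝ) (hp0 : 0 ≤ p) (hp1 : p < 1) (m : ℕ) :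
    ∑ t ∈ Finset.range m, p^(t+1) ≤ p / (1 - p) := by
  have h1 : (0:ℝ) < 1 - p := by linarith
  have h2 : ∑ t ∈ Finset.range m, p^t ≤ 1 / (1-p) := by
    rw [geom_sum_eq (ne_of_lt hp1) m]
    have he : (p^m - 1)/(p-1) = (1-p^m)/(1-p) := by
      rw [div_eq_div_iff (by linarith) (by linarith)]
      ring
    rw [he, div_le_div_iff₀ h1 h1]
    have : (0:ℝ) ≤ p^m := by positivity
    nlinarith
  calc ∑ t ∈ Finset.range m, p^(t+1) = p * ∑ t ∈ Finset.range m, p^t := by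
        rw [Finset.mul_sum]; apply Finset.sum_congr rfl; intro t _; ring
    _ ≤ p * (1/(1-p)) := by apply mul_le_mul_of_nonneg_left h2 hp0
    _ = p / (1-p) := by ring

lemma sum_pareto_mem (n : ℕ) (hn : 4 ≤ n) (i : ℕ) (hi : i ≤ n) :
    ∑ z ∈ paretoSet n, mutProb n (onesZeros n i) z ≤ 1 / Real.exp 1 + 3 / (n:ℝ) := by
  have hn0 : (0:ℝ) < (n:ℝ) := by positivity
  have hn4 : (4:ℝ) ≤ (n:ℝ) := by exact_mod_cast hn
  set p : ℝ := 1/(n:ℝ) with hp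
  have hp0 : 0 ≤ p := by positivity
  have hp1 : p < 1 := by rw [hp, div_lt_one hn0]; linarith
  have h1p : (0:ℝ) < 1 - p := by linarith
  -- rewrite the sum over the image
  rw [paretoSet, Finset.sum_image (fun a ha b hb hab => onesZeros_injOn n ha hb hab)]
  set g : ℕ → ℝ := fun j => mutProb n (onesZeros n i) (onesZeros n j) with hg
  -- split the sum
  have hsplit : ∑ j ∈ Finset.range (n+1), g j
      = (∑ j ∈ Finset.Ico 0 i, g j) + g i + ∑ j ∈ Finset.Ico (i+1) (n+1), g j := by
    rw [Finset.range_eq_Ico,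
      ← Finset.sum_Ico_consecutive g (Nat.zero_le i) (by omega : i ≤ n+1),
      Finset.sum_eq_sum_Ico_succ_bot (by omega : i < n+1) g]
    ring
  rw [hsplit]
  have hgi : g i = (1-p)^n := by
    rw [hg]
    simp only []
    rw [mutProb_onesZeros n i i le_rfl hi, Nat.sub_self, Nat.sub_zero, pow_zero, one_mul]
  have hA : ∑ j ∈ Finset.Ico 0 i, g j ≤ p / (1-p) := by
    have hb : ∀ j ∈ Finset.Ico 0 i, g j ≤ p^(i-j) := by
      intro j hj
      simp at hj
      rw [hg]
      simp only []
      rw [mutProb_comm, mutProb_onesZeros n j i (by omega) hi]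
      have h2 : (1-p)^(n-(i-j)) ≤ 1 := pow_le_one₀ (by linarith) (by linarith)
      calc p^(i-j) * (1-p)^(n-(i-j)) ≤ p^(i-j) * 1 :=
            mul_le_mul_of_nonneg_left h2 (by positivity)
        _ = p^(i-j) := by ring
    calc ∑ j ∈ Finset.Ico 0 i, g j ≤ ∑ j ∈ Finset.Ico 0 i, p^(i-j) :=
          Finset.sum_le_sum hb
      _ = ∑ j ∈ Finset.range i, p^(i-j) := by rw [Finset.range_eq_Ico]
      _ = ∑ j ∈ Finset.range i, p^(j+1) := by
          rw [← Finset.sum_range_reflect (fun j => p^(i-j)) i]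
          apply Finset.sum_congr rfl
          intro j hj
          simp at hj
          congr 1
          omega
      _ ≤ p / (1-p) := geom_tail p hp0 hp1 i
  have hB : ∑ j ∈ Finset.Ico (i+1) (n+1), g j ≤ p / (1-p) := by
    have hb : ∀ j ∈ Finset.Ico (i+1) (n+1), g j ≤ p^(j-i) := by
      intro j hj
      simp at hj
      rw [hg]
      simp only []
      rw [mutProb_onesZeros n i j (by omega) (by omega)]
      have h2 : (1-p)^(n-(j-i)) ≤ 1 := pow_le_one₀ (by linarith) (by linarith)
      calc p^(j-i) * (1-p)^(n-(j-i)) ≤ p^(j-i) * 1 :=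
            mul_le_mul_of_nonneg_left h2 (by positivity)
        _ = p^(j-i) := by ring
    calc ∑ j ∈ Finset.Ico (i+1) (n+1), g j ≤ ∑ j ∈ Finset.Ico (i+1) (n+1), p^(j-i) :=
          Finset.sum_le_sum hb
      _ = ∑ t ∈ Finset.range (n+1-(i+1)), p^((i+1+t)-i) := by
          rw [Finset.sum_Ico_eq_sum_range]
      _ = ∑ t ∈ Finset.range (n-i), p^(t+1) := by
          apply Finset.sum_congr (by congr 1; omega)
          intro t _
          congr 1
          omega
      _ ≤ p / (1-p) := geom_tail p hp0 hp1 _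
  have hexp : (1-p)^n ≤ 1 / Real.exp 1 := by
    have h1 : 1 - p ≤ Real.exp (-p) := by
      have := Real.add_one_le_exp (-p)
      linarith
    have h2 : (1-p)^n ≤ (Real.exp (-p))^n := pow_le_pow_left₀ (by linarith) h1 n
    rw [← Real.exp_nat_mul] at h2
    have h3 : (n:ℝ) * (-p) = -1 := by
      rw [hp]
      field_simp
    rw [h3, Real.exp_neg] at h2
    calc (1-p)^n ≤ (Real.exp 1)⁻¹ := h2
      _ = 1 / Real.exp 1 := by ring
  have hgeom : p / (1-p) ≤ 3 / (2*(n:ℝ)) := by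
    rw [div_le_div_iff₀ h1p (by linarith : (0:ℝ) < 2*(n:ℝ))]
    have e1 : p * (2*(n:ℝ)) = 2 := by rw [hp]; field_simp
    have e2 : 3*p ≤ 1 := by
      rw [hp, mul_one_div, div_le_one hn0]; linarith
    linarith
  have h3n : 3 / (2*(n:ℝ)) + 3 / (2*(n:ℝ)) = 3 / n := by ring
  linarith


/-- Let `x` be a random bit string, with distribution given by the mass function `w`,
such that `P(x ∈ F) ≤ r`, where `F = {1^i 0^(n-i) : 0 ≤ i ≤ n}` is the Pareto set of LOTZ,
and let `y` be obtained from `x` by standard bit mutation with rate `1/n`.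
Then `P(y ∈ F) ≤ r (1/e + 3/n) + 3/n`. -/
theorem prob_mutation_of_random_parent_hits_paretoSet (n : ℕ) (hn : 1 ≤ n)
    (w : (Fin n → Bool) → ℝ) (hw0 : ∀ x, 0 ≤ w x) (hw1 : ∑ x : Fin n → Bool, w x = 1)
    (r : ℝ) (hr0 : 0 ≤ r) (hr1 : r ≤ 1) (hF : ∑ x ∈ paretoSet n, w x ≤ r) :
    ∑ x : Fin n → Bool, w x * ∑ z ∈ paretoSet n, mutProb n x z ≤
      r * (1 / Real.exp 1 + 3 / (n : ℝ)) + 3 / (n : ℝ) := by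
  classical
  have hn0 : (0:ℝ) < (n:ℝ) := by exact_mod_cast hn
  have hrpos : 0 ≤ r * (1 / Real.exp 1 + 3 / (n : ℝ)) := by
    apply mul_nonneg hr0
    have := Real.exp_pos 1
    positivity
  by_cases hsmall : n < 4
  · -- trivial case: RHS ≥ 1 ≥ LHS
    have hS1 : ∀ x : Fin n → Bool, ∑ z ∈ paretoSet n, mutProb n x z ≤ 1 := by
      intro x
      calc ∑ z ∈ paretoSet n, mutProb n x z
          ≤ ∑ z : Fin n → Bool, mutProb n x z :=
            Finset.sum_le_sum_of_subset_of_nonneg (Finset.subset_univ _)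
              (fun z _ _ => mutProb_nonneg n hn x z)
        _ = 1 := sum_univ_mutProb n x
    have hLHS : ∑ x : Fin n → Bool, w x * ∑ z ∈ paretoSet n, mutProb n x z ≤ 1 := by
      calc ∑ x : Fin n → Bool, w x * ∑ z ∈ paretoSet n, mutProb n x z
          ≤ ∑ x : Fin n → Bool, w x * 1 :=
            Finset.sum_le_sum (fun x _ => mul_le_mul_of_nonneg_left (hS1 x) (hw0 x))
        _ = 1 := by simpa using hw1
    have h3n : (1:ℝ) ≤ 3 / (n:ℝ) := by
      rw [le_div_iff₀ hn0]
      have : (n:ℝ) ≤ 3 := by exact_mod_cast Nat.lt_succ_iff.mp hsmall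
      linarith
    linarith
  · push_neg at hsmall
    have key : ∀ x : Fin n → Bool, ∑ z ∈ paretoSet n, mutProb n x z
        ≤ if x ∈ paretoSet n then 1 / Real.exp 1 + 3 / (n:ℝ) else 3 / (n:ℝ) := by
      intro x
      by_cases hx : x ∈ paretoSet n
      · rw [if_pos hx]
        obtain ⟨i, hi, rfl⟩ := Finset.mem_image.mp hx
        exact sum_pareto_mem n hsmall i (Nat.lt_succ_iff.mp (Finset.mem_range.mp hi))
      · rw [if_neg hx]
        calc ∑ z ∈ paretoSet n, mutProb n x z ≤ 2 / n := sum_pareto_not_mem n hn x hx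
          _ ≤ 3 / n := by gcongr <;> norm_num
    have step1 : ∑ x : Fin n → Bool, w x * ∑ z ∈ paretoSet n, mutProb n x z
        ≤ ∑ x : Fin n → Bool,
            w x * (if x ∈ paretoSet n then 1 / Real.exp 1 + 3 / (n:ℝ) else 3 / (n:ℝ)) :=
      Finset.sum_le_sum (fun x _ => mul_le_mul_of_nonneg_left (key x) (hw0 x))
    have step2 : ∑ x : Fin n → Bool,
        w x * (if x ∈ paretoSet n then 1 / Real.exp 1 + 3 / (n:ℝ) else 3 / (n:ℝ))
        = 3 / (n:ℝ) + (∑ x ∈ paretoSet n, w x) * (1 / Real.exp 1) := by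
      have hsplit : ∀ x : Fin n → Bool,
          w x * (if x ∈ paretoSet n then 1 / Real.exp 1 + 3 / (n:ℝ) else 3 / (n:ℝ))
          = w x * (3 / (n:ℝ)) + (if x ∈ paretoSet n then w x * (1 / Real.exp 1) else 0) := by
        intro x
        split <;> ring
      rw [Finset.sum_congr rfl (fun x _ => hsplit x), Finset.sum_add_distrib,
        ← Finset.sum_mul, hw1, Finset.sum_ite_mem, Finset.univ_inter, one_mul,
        ← Finset.sum_mul]
    have step3 : (∑ x ∈ paretoSet n, w x) * (1 / Real.exp 1) ≤ r * (1 / Real.exp 1) := by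
      apply mul_le_mul_of_nonneg_right hF
      have := Real.exp_pos 1
      positivity
    have hr3 : 0 ≤ r * (3 / (n:ℝ)) := by positivity
    calc ∑ x : Fin n → Bool, w x * ∑ z ∈ paretoSet n, mutProb n x z
        ≤ 3 / (n:ℝ) + (∑ x ∈ paretoSet n, w x) * (1 / Real.exp 1) := by
          rw [← step2]; exact step1
      _ ≤ 3 / (n:ℝ) + r * (1 / Real.exp 1) := by linarith
      _ ≤ r * (1 / Real.exp 1 + 3 / (n : ℝ)) + 3 / (n : ℝ) := by
          have : r * (1 / Real.exp 1 + 3 / (n : ℝ)) = r * (1 / Real.exp 1) + r * (3/(n:ℝ)) := by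
            ring
          linarith
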